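/- For every system F type ∀X.T, the arena A(∀X.T) is isomorphic to the disjoint union, over all system F types U, of the arenas A(T[U/X]): there is a bijection between the nonempty traces of Δ_{∀X.T} and the disjoint union ⨿_U (nonempty traces of Δ_{T[U/X]}) which is an order isomorphism for the prefix orderings on each component. -/

import Mathlib

namespace Hypergames

/-! Generic transition systems, games, dialogues and strategies. -/

/-- The state reached from `q` by following the labels `ls` (if defined). -/
def reach {Q L : Type} (tr : Q → L → Option Q) : Q → List L → Option Q
  | q, [] => some q
  | q, l :: ls => (tr q l).bind fun q' => reach tr q' ls

/-- The game (set of traces) of a transition system with transition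
function `tr` and initial state `star`. -/
def gameOf {Q L : Type} (tr : Q → L → Option Q) (star : Q) : Set (List L) :=
  { ls | (reach tr star ls).isSome }

/-- A set of `M`-traces is a game if it contains the empty trace and the
predecessor of each of its nonempty members. -/
def IsGame {M : Type} (G : Set (List M)) : Prop :=
  [] ∈ G ∧ ∀ p ∈ G, p ≠ [] → p.dropLast ∈ G

/-- The pointer of the `j`-th element (1-indexed) of a dialogue. -/
def pointer {M : Type} (d : List (ℕ × M)) (j : ℕ) : Option ℕ :=
  (d[j-1]?).map Prod.fst

/-- A dialogue over `M`: an `(ℕ × M)`-trace `⟨α₁,m₁⟩…⟨α_k,m_k⟩` such that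
`i - αᵢ ∈ {1,3,5,…}` for each `i`. -/
def IsDialogue {M : Type} (d : List (ℕ × M)) : Prop :=
  ∀ j, 1 ≤ j → j ≤ d.length → ∀ α, pointer d j = some α → α < j ∧ Odd (j - α)

/-- A chain of (1-indexed) positions `d₁ < d₂ < ⋯ < dₙ` of the dialogue `d`
with `α_{d₁} = 0` and `α_{d_j} = d_{j-1}`; such a chain determines a thread. -/
def IsChain {M : Type} (d : List (ℕ × M)) (ds : List ℕ) : Prop :=
  (∀ j ∈ ds, 1 ≤ j ∧ j ≤ d.length) ∧
  (∀ j, ds.head? = some j → pointer d j = some 0) ∧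
  List.Chain' (fun a b => pointer d b = some a) ds ∧
  List.Chain' (· < ·) ds

/-- The thread (sequence of moves) along a chain of positions. -/
def threadOf {M : Type} (d : List (ℕ × M)) (ds : List ℕ) : List M :=
  ds.filterMap fun j => (d[j-1]?).map Prod.snd

/-- A dialogue respects `G` if all its threads are in `G`. -/
def Respects {M : Type} (G : Set (List M)) (d : List (ℕ × M)) : Prop :=
  ∀ ds, IsChain d ds → threadOf d ds ∈ G

/-- The backtracking game `ℬG`: all dialogues over `M` respecting `G`. -/
def BG {M : Type} (G : Set (List M)) : Set (List (ℕ × M)) :=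
  { d | IsDialogue d ∧ Respects G d }

/-- The `P`-backtracking game `𝒫G`: dialogues of `ℬG` in which every
odd-indexed move points to the immediately preceding move. -/
def PG {M : Type} (G : Set (List M)) : Set (List (ℕ × M)) :=
  { d | d ∈ BG G ∧ ∀ j, Odd j → j ≤ d.length → pointer d j = some (j - 1) }

/-- A strategy (for the second player `P`) on a game `G`. -/
def IsStrategy {M : Type} (G σ : Set (List M)) : Prop :=
  σ ⊆ G ∧ IsGame σ ∧ ∀ p ∈ σ, Odd p.length → ∃! m, p ++ [m] ∈ σ

/-- A strategy is live if it responds to every stimulus. -/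
def Live {M : Type} (G σ : Set (List M)) : Prop :=
  ∀ p ∈ σ, Even p.length → ∀ m, p ++ [m] ∈ G → p ++ [m] ∈ σ

/-- The thread ending at position `j` (1-indexed), computed by following
pointers backwards, with explicit fuel (use fuel `j`). -/
def threadTo {M : Type} (d : List (ℕ × M)) : ℕ → ℕ → List M
  | 0, _ => []
  | fuel + 1, j =>
    match d[j-1]? with
    | none => []
    | some (α, m) => if α = 0 then [m] else threadTo d fuel α ++ [m]

/-! System F types (type variables are natural numbers). -/

/-- System F types, generated from type variables by implication `T → U` and
universal quantification `∀X.T`. -/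
inductive FTy : Type
  | var : ℕ → FTy
  | arrow : FTy → FTy → FTy
  | all : ℕ → FTy → FTy

/-- The free variables of a system F type. -/
def fvF : FTy → Set ℕ
  | .var X => {X}
  | .arrow A B => fvF A ∪ fvF B
  | .all X T => fvF T \ {X}

/-- Substitution `T[V/X]` of `V` for the free occurrences of `X` in `T`
(bound variables are assumed distinct from one another and from all free
variables, so no renaming is performed). -/
def substF : FTy → ℕ → FTy → FTy
  | .var Y, X, V => if Y = X then V else .var Y
  | .arrow A B, X, V => .arrow (substF A X V) (substF B X V)
  | .all Y T, X, V => if Y = X then .all Y T else .all Y (substF T X V)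

/-- Whether `T` has an available quantifier: `∀X` is available in `T` if
`T = ∀X.U`, or `T = U → T′` with `∀X` available in `T′`, or `T = ∀Y.T′` with
`∀X` available in `T′`. -/
def hasAvail : FTy → Bool
  | .var _ => false
  | .all _ _ => true
  | .arrow _ B => hasAvail B

/-- A type is resolved if it has no available quantifier, i.e. has the form
`T₁→…→Tₙ→X`. -/
def ResolvedF (T : FTy) : Prop := hasAvail T = false

/-- The variable bound by the leftmost available quantifier, if any. -/
def leftmostAvailVar : FTy → Option ℕ
  | .var _ => none
  | .all X _ => some X
  | .arrow _ B => leftmostAvailVar B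

/-- Importing `V` into `T`: `T · V = T^X[V/X]` where `∀X` is the leftmost
available quantifier of `T` and `T^X` deletes it (undefined if `T` has no
available quantifier). -/
def importOne : FTy → FTy → Option FTy
  | .var _, _ => none
  | .all X T, V => some (substF T X V)
  | .arrow A B, V => (importOne B V).map (.arrow A)

/-- Iterated importation `T · V₁ … V_k`. -/
def importList : FTy → List FTy → Option FTy
  | T, [] => some T
  | T, V :: Vs => (importOne T V).bind fun T' => importList T' Vs

/-- The branches `T₁,…,Tₙ` of a resolved type `T₁→…→Tₙ→X`. -/
def fbranches : FTy → List FTy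
  | .var _ => []
  | .arrow A B => A :: fbranches B
  | .all _ _ => []

/-- The rightmost variable of a type (its colour when a target state). -/
def fheadVar : FTy → ℕ
  | .var X => X
  | .arrow _ B => fheadVar B
  | .all _ T => fheadVar T

/-- Labels of system F transition systems: a branch choice `i ≥ 1` together
with a list of imports. -/
abbrev FLabel : Type := ℕ × List FTy

/-- The transition function of the system F transition system `Δ_T`: states
are system F types plus an initial state `⋆` (`none`); transitions are
`⋆ →^{⟨1,V₁…V_k⟩} T·V₁…V_k` whenever `T·V₁…V_k` is defined and resolved, and
`(T₁…Tₙ→X) →^{⟨i,V₁…V_k⟩} (U₁…U_m→Y)` whenever `1 ≤ i ≤ n` and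
`Tᵢ·V₁…V_k = U₁…U_m→Y` is resolved. -/
def fTrans (T : FTy) : Option FTy → FLabel → Option (Option FTy)
  | none, (i, Vs) =>
      if i = 1 then
        (importList T Vs).bind fun W =>
          if hasAvail W then none else some (some W)
      else none
  | some S, (i, Vs) =>
      if 1 ≤ i ∧ hasAvail S = false then
        (fbranches S)[i-1]?.bind fun Ti =>
          (importList Ti Vs).bind fun W =>
            if hasAvail W then none else some (some W)
      else none

/-- The arena `A(T)` of a system F type `T`: the set of nonempty traces of
the transition system `Δ_T`, ordered by the prefix relation. -/
def ArenaF (T : FTy) : Set (List FLabel) :=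
  { l | l ≠ [] ∧ l ∈ gameOf (fTrans T) none }

/-- For every system F type `∀X.T`, the arena `A(∀X.T)` is
isomorphic to the disjoint union, over all system F types `U`, of the arenas
`A(T[U/X])`: there is a bijection between the nonempty traces of `Δ_{∀X.T}`
and the disjoint union `⨿_U A(T[U/X])` which is an order isomorphism for the
prefix orderings on each component. -/
lemma fTrans_shape (A : FTy) (s : Option FTy) (i : ℕ) (Vs : List FTy) (q : Option FTy)
    (h : fTrans A s (i, Vs) = some q) : ∃ W, q = some W := by
  cases s <;> simp only [fTrans] at h <;> split at h <;>
    simp_all [Option.bind_eq_some_iff] <;> aesop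

lemma reach_some_eq (A B : FTy) : ∀ (ls : List FLabel) (S : FTy),
    reach (fTrans A) (some S) ls = reach (fTrans B) (some S) ls := by
  intro ls
  induction ls with
  | nil => intro S; rfl
  | cons l ls ih =>
    intro S
    obtain ⟨i, Vs⟩ := l
    show (fTrans A (some S) (i, Vs)).bind _ = (fTrans B (some S) (i, Vs)).bind _
    have h : fTrans B (some S) (i, Vs) = fTrans A (some S) (i, Vs) := rfl
    rw [h]
    rcases hv : fTrans A (some S) (i, Vs) with _ | q
    · rfl
    · obtain ⟨W, rfl⟩ := fTrans_shape _ _ _ _ _ hv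
      simpa using ih W

lemma reach_all_eq (X : ℕ) (T U : FTy) (Vs : List FTy) (rest : List FLabel) :
    reach (fTrans (FTy.all X T)) none (((1, U :: Vs) : FLabel) :: rest)
      = reach (fTrans (substF T X U)) none (((1, Vs) : FLabel) :: rest) := by
  show (fTrans (FTy.all X T) none (1, U :: Vs)).bind _
      = (fTrans (substF T X U) none (1, Vs)).bind _
  have h : fTrans (FTy.all X T) none (1, U :: Vs)
      = fTrans (substF T X U) none (1, Vs) := rfl
  rw [h]
  rcases hv : fTrans (substF T X U) none (1, Vs) with _ | q
  · rfl
  · obtain ⟨W, rfl⟩ := fTrans_shape _ _ _ _ _ hv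
    simpa using reach_some_eq (FTy.all X T) (substF T X U) rest W

lemma fTrans_none_first (A : FTy) (i : ℕ) (Vs : List FTy) (q : Option FTy)
    (h : fTrans A none (i, Vs) = some q) : i = 1 := by
  simp only [fTrans] at h; split at h <;> simp_all

lemma fTrans_all_first (X : ℕ) (T : FTy) (i : ℕ) (Vs : List FTy) (q : Option FTy)
    (h : fTrans (FTy.all X T) none (i, Vs) = some q) : i = 1 ∧ Vs ≠ [] := by
  have hi := fTrans_none_first _ _ _ _ h
  subst hi
  refine ⟨rfl, ?_⟩
  rintro rfl
  simp [fTrans, importList, hasAvail] at h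
lemma mem_all_shape {X : ℕ} {T : FTy} {l : List FLabel} (hl : l ∈ ArenaF (FTy.all X T)) :
    ∃ U Vs rest, l = ((1, U :: Vs) : FLabel) :: rest := by
  obtain ⟨hne, hg⟩ := hl
  match l with
  | [] => exact absurd rfl hne
  | (i, Ws) :: rest =>
    obtain ⟨q, hq⟩ := Option.isSome_iff_exists.mp hg
    rw [show reach (fTrans (FTy.all X T)) none ((i, Ws) :: rest)
        = (fTrans (FTy.all X T) none (i, Ws)).bind _ from rfl,
      Option.bind_eq_some_iff] at hq
    obtain ⟨q', hq', -⟩ := hq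
    obtain ⟨rfl, hWs⟩ := fTrans_all_first X T i Ws q' hq'
    match Ws, hWs with
    | U :: Vs, _ => exact ⟨U, Vs, rest, rfl⟩

lemma mem_arena_shape {S : FTy} {l : List FLabel} (hl : l ∈ ArenaF S) :
    ∃ Vs rest, l = ((1, Vs) : FLabel) :: rest := by
  obtain ⟨hne, hg⟩ := hl
  match l with
  | [] => exact absurd rfl hne
  | (i, Ws) :: rest =>
    obtain ⟨q, hq⟩ := Option.isSome_iff_exists.mp hg
    rw [show reach (fTrans S) none ((i, Ws) :: rest)
        = (fTrans S none (i, Ws)).bind _ from rfl,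
      Option.bind_eq_some_iff] at hq
    obtain ⟨q', hq', -⟩ := hq
    obtain rfl := fTrans_none_first S i Ws q' hq'
    exact ⟨Ws, rest, rfl⟩

lemma mem_all_iff (X : ℕ) (T U : FTy) (Vs : List FTy) (rest : List FLabel) :
    (((1, U :: Vs) : FLabel) :: rest ∈ ArenaF (FTy.all X T)) ↔
      (((1, Vs) : FLabel) :: rest ∈ ArenaF (substF T X U)) := by
  unfold ArenaF gameOf
  simp [reach_all_eq X T U Vs rest]
private def fComp : List FLabel → FTy
  | (_, U :: _) :: _ => U
  | _ => FTy.var 0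

private def fTail : List FLabel → List FLabel
  | (_, _ :: Vs) :: rest => ((1, Vs) : FLabel) :: rest
  | _ => []

theorem arena_all_iso (X : ℕ) (T : FTy) :
    ∃ e : { l // l ∈ ArenaF (FTy.all X T) } ≃
          (Σ U : FTy, { l // l ∈ ArenaF (substF T X U) }),
      ∀ a b : { l // l ∈ ArenaF (FTy.all X T) },
        a.1 <+: b.1 ↔ ((e a).1 = (e b).1 ∧ (e a).2.1 <+: (e b).2.1) := by
  have hmem : ∀ a : { l // l ∈ ArenaF (FTy.all X T) },
      fTail a.1 ∈ ArenaF (substF T X (fComp a.1)) := by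
    rintro ⟨l, hl⟩
    obtain ⟨U, Vs, rest, rfl⟩ := mem_all_shape hl
    simpa [fComp, fTail] using (mem_all_iff X T U Vs rest).mp hl
  set f : { l // l ∈ ArenaF (FTy.all X T) } →
      (Σ U : FTy, { l // l ∈ ArenaF (substF T X U) }) :=
    fun a => ⟨fComp a.1, fTail a.1, hmem a⟩ with hf
  have hbij : Function.Bijective f := by
    constructor
    · rintro ⟨a, ha⟩ ⟨b, hb⟩ hab
      obtain ⟨U, Vs, ra, rfl⟩ := mem_all_shape ha
      obtain ⟨U', Vs', rb, rfl⟩ := mem_all_shape hb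
      simp only [hf, fComp, fTail, Sigma.mk.inj_iff] at hab
      obtain ⟨rfl, h2⟩ := hab
      have := congrArg Subtype.val (eq_of_heq h2)
      simp_all
    · rintro ⟨U, l, hl⟩
      obtain ⟨Vs, rest, rfl⟩ := mem_arena_shape hl
      refine ⟨⟨((1, U :: Vs) : FLabel) :: rest, (mem_all_iff X T U Vs rest).mpr hl⟩, ?_⟩
      simp only [hf, fComp, fTail]
  refine ⟨Equiv.ofBijective f hbij, ?_⟩
  rintro ⟨a, ha⟩ ⟨b, hb⟩
  obtain ⟨U, Vs, ra, rfl⟩ := mem_all_shape ha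
  obtain ⟨U', Vs', rb, rfl⟩ := mem_all_shape hb
  show _ ↔ ((f _).1 = (f _).1 ∧ (f _).2.1 <+: (f _).2.1)
  simp only [hf, fComp, fTail]
  simp [List.cons_prefix_cons, and_assoc]
  intro _
  show _ ↔ (((1, Vs) : FLabel) :: ra) <+: (((1, Vs') : FLabel) :: rb)
  simp [List.cons_prefix_cons]

end Hypergames
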